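/- Let p be a positive integer, let K : ℝ^p → ℝ be nonnegative, spherically symmetric (K(u) = k(‖u‖₂) for some k), with ∫ (1 + ‖u‖₂⁴) K(u) du < ∞, and set μ₂ = ∫ u₁² K(u) du and κ₀ = ∫ K(u) du. Let f : ℝ^p → ℝ be twice continuously differentiable with bounded first and second derivatives. Fix x ∈ ℝ^p and for h > 0 define the (p+1) × (p+1) matrix A(h) = ∫_{ℝ^p} (1, uᵀ)ᵀ (1, uᵀ) K(u) f(x + h u) du. Then, as h → 0⁺, A(h) − [[κ₀ f(x), h μ₂ ∇f(x)ᵀ], [h μ₂ ∇f(x), μ₂ f(x) I_p]] = O(h²) entrywise; i.e. there exist C > 0 and h₀ > 0 such that every entry of this difference has absolute value at most C h² for all 0 < h ≤ h₀. -/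

import Mathlib

open MeasureTheory

/-- The augmented vector `u⁺ = (1, uᵀ)ᵀ`, indexed by `Fin 1 ⊕ Fin p`. -/
def aug {p : ℕ} (u : Fin p → ℝ) : Fin 1 ⊕ Fin p → ℝ :=
  Sum.elim (fun _ => (1 : ℝ)) u

namespace Stmt6Aux
variable {p : ℕ}

/-! ### Coordinate reflections and swaps -/

def negC (m : Fin p) (u : Fin p → ℝ) : Fin p → ℝ := fun i => if i = m then -u i else u i

lemma negC_self (m : Fin p) (u : Fin p → ℝ) : negC m u m = -u m := by simp [negC]
lemma negC_ne {i m : Fin p} (h : i ≠ m) (u : Fin p → ℝ) : negC m u i = u i := by simp [negC, h]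

lemma measurable_negC (m : Fin p) : Measurable (negC (p := p) m) := by
  unfold negC
  apply measurable_pi_lambda
  intro i
  by_cases h : i = m
  · simp only [if_pos h]; exact (measurable_pi_apply i).neg
  · simp only [if_neg h]; exact measurable_pi_apply i

def negCEquiv (m : Fin p) : (Fin p → ℝ) ≃ᵐ (Fin p → ℝ) where
  toFun := negC m
  invFun := negC m
  left_inv u := by funext i; simp only [negC]; split <;> simp
  right_inv u := by funext i; simp only [negC]; split <;> simp
  measurable_toFun := measurable_negC m
  measurable_invFun := measurable_negC m

lemma negC_mp (m : Fin p) :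
    MeasurePreserving (negCEquiv m) (volume : Measure (Fin p → ℝ)) volume := by
  have h := volume_preserving_pi (f := fun (i : Fin p) (t : ℝ) => if i = m then -t else t)
    (fun i => by
      by_cases h : i = m
      · simpa [h] using Measure.measurePreserving_neg (volume : Measure ℝ)
      · simp only [h, ↓reduceIte]; exact MeasurePreserving.id (volume : Measure ℝ))
  exact h

lemma negC_sumsq (m : Fin p) (u : Fin p → ℝ) :
    ∑ i, (negC m u i) ^ 2 = ∑ i, u i ^ 2 := by
  apply Finset.sum_congr rfl
  intro i _
  simp only [negC]; split <;> ring

lemma integral_eq_zero_of_odd (m : Fin p) (φ : (Fin p → ℝ) → ℝ)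
    (hodd : ∀ u, φ (negC m u) = - φ u) : ∫ u : Fin p → ℝ, φ u = 0 := by
  have h1 : ∫ u : Fin p → ℝ, φ (negCEquiv m u) = ∫ u : Fin p → ℝ, φ u :=
    (negC_mp m).integral_comp' φ
  have h2 : ∀ u, φ (negCEquiv m u) = - φ u := hodd
  simp_rw [h2, integral_neg] at h1
  linarith

def swapE (a b : Fin p) : (Fin p → ℝ) ≃ᵐ (Fin p → ℝ) :=
  MeasurableEquiv.arrowCongr' (Equiv.swap a b) (MeasurableEquiv.refl ℝ)

lemma swapE_mp (a b : Fin p) :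
    MeasurePreserving (swapE a b) (volume : Measure (Fin p → ℝ)) volume :=
  volume_preserving_arrowCongr' _ _ (MeasurePreserving.id _)

lemma swapE_apply (a b : Fin p) (u : Fin p → ℝ) (i : Fin p) :
    swapE a b u i = u (Equiv.swap a b i) := by
  simp [swapE, MeasurableEquiv.arrowCongr', Equiv.arrowCongr', Equiv.arrowCongr, Equiv.symm_swap]

lemma swapE_sumsq (a b : Fin p) (u : Fin p → ℝ) :
    ∑ i, (swapE a b u i) ^ 2 = ∑ i, u i ^ 2 := by
  simp_rw [swapE_apply]
  exact Equiv.sum_comp (Equiv.swap a b) (fun i => u i ^ 2)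

/-! ### Elementary bounds -/

lemma sqrt_facts (u : Fin p → ℝ) :
    0 ≤ Real.sqrt (∑ i, u i ^ 2) ∧ (Real.sqrt (∑ i, u i ^ 2)) ^ 2 = ∑ i, u i ^ 2 ∧
      ∀ i, |u i| ≤ Real.sqrt (∑ i, u i ^ 2) := by
  have hS : 0 ≤ ∑ i, u i ^ 2 := Finset.sum_nonneg fun i _ => sq_nonneg _
  refine ⟨Real.sqrt_nonneg _, Real.sq_sqrt hS, fun i => ?_⟩
  have h1 : u i ^ 2 ≤ ∑ j, u j ^ 2 :=
    Finset.single_le_sum (f := fun j => u j ^ 2) (fun j _ => sq_nonneg _) (Finset.mem_univ i)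
  calc |u i| = Real.sqrt (u i ^ 2) := (Real.sqrt_sq_eq_abs _).symm
    _ ≤ Real.sqrt (∑ j, u j ^ 2) := Real.sqrt_le_sqrt h1

lemma pow_le_aux (t : ℝ) (ht : 0 ≤ t) (d : ℕ) (hd : d ≤ 4) : t ^ d ≤ 1 + t ^ 4 := by
  rcases le_total t 1 with h | h
  · have h1 : t ^ d ≤ 1 := pow_le_one₀ ht h
    nlinarith [pow_nonneg ht 4]
  · have h2 : t ^ d ≤ t ^ 4 := pow_le_pow_right₀ h hd
    nlinarith

/-! ### Calculus -/

lemma fderiv_expand (f : (Fin p → ℝ) → ℝ) (x u : Fin p → ℝ) :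
    fderiv ℝ f x u = ∑ l, u l * fderiv ℝ f x (Pi.single l 1) := by
  have hu : u = ∑ l, u l • (Pi.single l 1 : Fin p → ℝ) := by
    funext i
    rw [Finset.sum_apply]
    simp only [Pi.smul_apply, smul_eq_mul]
    rw [Finset.sum_eq_single i]
    · simp
    · intro b _ hb; simp [Pi.single_apply, hb.symm]
    · simp
  conv_lhs => rw [hu]
  rw [map_sum]
  simp [smul_eq_mul]

lemma lipschitz_of_bdd (f : (Fin p → ℝ) → ℝ) (hf : ContDiff ℝ 2 f) (C₁ : ℝ)
    (hC₁ : ∀ y, ‖iteratedFDeriv ℝ 1 f y‖ ≤ C₁) (x y : Fin p → ℝ) :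
    |f y - f x| ≤ C₁ * ‖y - x‖ := by
  have := Convex.norm_image_sub_le_of_norm_fderiv_le
    (f := f) (s := Set.univ) (C := C₁)
    (fun z _ => (hf.differentiable (by norm_num)).differentiableAt)
    (fun z _ => by
      have h0 : ‖iteratedFDeriv ℝ 0 (fderiv ℝ f) z‖ = ‖iteratedFDeriv ℝ 1 f z‖ :=
        norm_iteratedFDeriv_fderiv
      rw [norm_iteratedFDeriv_zero] at h0
      rw [h0]; exact hC₁ z)
    convex_univ (Set.mem_univ x) (Set.mem_univ y)
  simpa [Real.norm_eq_abs] using this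

lemma taylor_bound (f : (Fin p → ℝ) → ℝ) (hf : ContDiff ℝ 2 f) (C₂ : ℝ)
    (hC₂ : ∀ y, ‖iteratedFDeriv ℝ 2 f y‖ ≤ C₂) (x v : Fin p → ℝ) :
    |f (x + v) - f x - fderiv ℝ f x v| ≤ C₂ * ‖v‖ ^ 2 := by
  have hf' : ContDiff ℝ 1 (fderiv ℝ f) := hf.fderiv_right (by norm_num)
  have hbound : ∀ z ∈ Metric.closedBall x ‖v‖, ‖fderiv ℝ f z - fderiv ℝ f x‖ ≤ C₂ * ‖v‖ := by
    intro z hz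
    have h1 : ∀ w, ‖fderiv ℝ (fderiv ℝ f) w‖ ≤ C₂ := by
      intro w
      have h0 : ‖iteratedFDeriv ℝ 0 (fderiv ℝ (fderiv ℝ f)) w‖
          = ‖iteratedFDeriv ℝ 1 (fderiv ℝ f) w‖ := norm_iteratedFDeriv_fderiv
      have h2 : ‖iteratedFDeriv ℝ 1 (fderiv ℝ f) w‖ = ‖iteratedFDeriv ℝ 2 f w‖ :=
        norm_iteratedFDeriv_fderiv
      rw [norm_iteratedFDeriv_zero] at h0
      rw [h0, h2]; exact hC₂ w
    have := Convex.norm_image_sub_le_of_norm_fderiv_le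
      (f := fderiv ℝ f) (s := Set.univ) (C := C₂)
      (fun w _ => (hf'.differentiable one_ne_zero).differentiableAt)
      (fun w _ => h1 w) convex_univ (Set.mem_univ x) (Set.mem_univ z)
    calc ‖fderiv ℝ f z - fderiv ℝ f x‖ ≤ C₂ * ‖z - x‖ := this
      _ ≤ C₂ * ‖v‖ := by
          have hC₂0 : 0 ≤ C₂ := le_trans (norm_nonneg _) (hC₂ x)
          have hzx : ‖z - x‖ ≤ ‖v‖ := by rw [← dist_eq_norm]; exact hz
          nlinarith [norm_nonneg (z - x)]
  have hmain := Convex.norm_image_sub_le_of_norm_fderiv_le'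
    (f := f) (s := Metric.closedBall x ‖v‖) (φ := fderiv ℝ f x) (C := C₂ * ‖v‖)
    (fun z _ => (hf.differentiable (by norm_num)).differentiableAt)
    hbound (convex_closedBall _ _)
    (Metric.mem_closedBall_self (norm_nonneg _))
    (by simpa [dist_eq_norm] using le_refl ‖v‖ : x + v ∈ Metric.closedBall x ‖v‖)
  have heq : x + v - x = v := by abel
  rw [heq] at hmain
  calc |f (x + v) - f x - fderiv ℝ f x v| ≤ C₂ * ‖v‖ * ‖v‖ := by
        simpa [Real.norm_eq_abs] using hmain
    _ = C₂ * ‖v‖ ^ 2 := by ring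

/-! ### Moment identities -/

section Moments
variable (K : (Fin p → ℝ) → ℝ) (k : ℝ → ℝ)
variable (hsym : ∀ u, K u = k (Real.sqrt (∑ i, u i ^ 2)))
include hsym

lemma K_negC (m : Fin p) (u : Fin p → ℝ) : K (negC m u) = K u := by
  rw [hsym, hsym u, negC_sumsq]

lemma K_swapE (a b : Fin p) (u : Fin p → ℝ) : K (swapE a b u) = K u := by
  rw [hsym, hsym u, swapE_sumsq]

lemma vanish (m : Fin p) (g : (Fin p → ℝ) → ℝ) (hodd : ∀ u, g (negC m u) = - g u) :
    ∫ u : Fin p → ℝ, g u * K u = 0 := by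
  apply integral_eq_zero_of_odd m
  intro u
  rw [hodd, K_negC K k hsym]; ring

lemma mom1 (j : Fin p) : ∫ u : Fin p → ℝ, u j * K u = 0 :=
  vanish K k hsym j _ (fun u => by rw [negC_self])

lemma mom2_off {i j : Fin p} (hij : i ≠ j) : ∫ u : Fin p → ℝ, u i * u j * K u = 0 :=
  vanish K k hsym i _ (fun u => by rw [negC_self, negC_ne (Ne.symm hij)]; ring)

lemma mom2_diag (i₀ j : Fin p) :
    (∫ u : Fin p → ℝ, u j * u j * K u) = ∫ u : Fin p → ℝ, u i₀ ^ 2 * K u := by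
  have h := (swapE_mp i₀ j).integral_comp' (fun u : Fin p → ℝ => u j * u j * K u)
  rw [← h]
  refine integral_congr_ae (Filter.Eventually.of_forall fun u => ?_)
  simp only
  rw [swapE_apply, Equiv.swap_apply_right, K_swapE K k hsym]
  ring

lemma mom3 (i j l : Fin p) : ∫ u : Fin p → ℝ, u i * u j * u l * K u = 0 := by
  by_cases hij : i = j
  · subst hij
    by_cases hil : i = l
    · subst hil
      exact vanish K k hsym i _ (fun u => by rw [negC_self]; ring)
    · exact vanish K k hsym l _ (fun u => by rw [negC_self, negC_ne hil]; ring)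
  · by_cases hjl : l = j
    · subst hjl
      exact vanish K k hsym i _ (fun u => by rw [negC_self, negC_ne (Ne.symm hij)]; ring)
    · by_cases hil : l = i
      · subst hil
        exact vanish K k hsym j _ (fun u => by rw [negC_self, negC_ne hij]; ring)
      · exact vanish K k hsym l _
          (fun u => by rw [negC_self, negC_ne (Ne.symm hil), negC_ne (Ne.symm hjl)]; ring)

end Moments

/-! ### Integrability -/

section Integrability
variable (K : (Fin p → ℝ) → ℝ)
variable (hK_int : Integrable (fun u : Fin p → ℝ => (1 + (∑ i, u i ^ 2) ^ 2) * K u) volume)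
variable (hK_nonneg : ∀ u, 0 ≤ K u)

include hK_int in
lemma K_aesm : AEStronglyMeasurable K (volume : Measure (Fin p → ℝ)) := by
  have hc : Continuous fun u : Fin p → ℝ => (1 + (∑ i, u i ^ 2) ^ 2)⁻¹ := by
    apply Continuous.inv₀
    · exact continuous_const.add
        ((continuous_finset_sum _ fun i _ => (continuous_apply i).pow 2).pow 2)
    · intro u
      have : 0 ≤ ∑ i, u i ^ 2 := Finset.sum_nonneg fun i _ => sq_nonneg _
      positivity
  have heq : (fun u : Fin p → ℝ =>
      (1 + (∑ i, u i ^ 2) ^ 2)⁻¹ * ((1 + (∑ i, u i ^ 2) ^ 2) * K u)) = K := by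
    funext u
    rw [inv_mul_cancel_left₀]
    have : 0 ≤ ∑ i, u i ^ 2 := Finset.sum_nonneg fun i _ => sq_nonneg _
    positivity
  rw [← heq]
  exact hc.aestronglyMeasurable.mul hK_int.1

include hK_int in
lemma integrable_dom (F : (Fin p → ℝ) → ℝ) (hF : AEStronglyMeasurable F volume) (c : ℝ)
    (hb : ∀ u, |F u| ≤ c * ((1 + (∑ i, u i ^ 2) ^ 2) * K u)) : Integrable F :=
  Integrable.mono' (hK_int.const_mul c) hF
    (Filter.Eventually.of_forall fun u => by simpa [Real.norm_eq_abs] using hb u)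

end Integrability

/-! ### Main decomposition -/

lemma main_decomp
    (K : (Fin p → ℝ) → ℝ) (k : ℝ → ℝ)
    (hsym : ∀ u, K u = k (Real.sqrt (∑ i, u i ^ 2)))
    (hK_int : Integrable (fun u : Fin p → ℝ => (1 + (∑ i, u i ^ 2) ^ 2) * K u) volume)
    (hK_nonneg : ∀ u, 0 ≤ K u)
    (f : (Fin p → ℝ) → ℝ) (hf : ContDiff ℝ 2 f)
    (C₂ : ℝ) (hC₂ : ∀ y, ‖iteratedFDeriv ℝ 2 f y‖ ≤ C₂)
    (x : Fin p → ℝ) (h : ℝ) (hh : 0 < h)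
    (w : (Fin p → ℝ) → ℝ) (hw : Continuous w)
    (hwb : ∀ u, |w u| ≤ 1 + ∑ i, u i ^ 2) :
    |(∫ u : Fin p → ℝ, w u * K u * f (x + h • u))
        - ((∫ u : Fin p → ℝ, w u * K u) * f x
          + h * ∑ l, fderiv ℝ f x (Pi.single l 1) * ∫ u : Fin p → ℝ, w u * u l * K u)|
      ≤ 2 * C₂ * (∫ u : Fin p → ℝ, (1 + (∑ i, u i ^ 2) ^ 2) * K u) * h ^ 2 := by
  have hC₂0 : 0 ≤ C₂ := le_trans (norm_nonneg _) (hC₂ x)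
  have hKa : AEStronglyMeasurable K (volume : Measure (Fin p → ℝ)) := K_aesm K hK_int
  -- pointwise bounds
  have hb0 : ∀ u : Fin p → ℝ, |w u| ≤ 2 * (1 + (∑ i, u i ^ 2) ^ 2) := by
    intro u
    obtain ⟨ht0, ht2, -⟩ := sqrt_facts u
    set t := Real.sqrt (∑ i, u i ^ 2) with htdef
    have h2 : t ^ 2 ≤ 1 + t ^ 4 := pow_le_aux t ht0 2 (by norm_num)
    have h4 : t ^ 4 = (∑ i, u i ^ 2) ^ 2 := by rw [← ht2]; ring
    calc |w u| ≤ 1 + ∑ i, u i ^ 2 := hwb u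
      _ = 1 + t ^ 2 := by rw [ht2]
      _ ≤ 2 * (1 + t ^ 4) := by nlinarith
      _ = 2 * (1 + (∑ i, u i ^ 2) ^ 2) := by rw [h4]
  have hb1 : ∀ (l : Fin p) (u : Fin p → ℝ),
      |w u * u l| ≤ 2 * (1 + (∑ i, u i ^ 2) ^ 2) := by
    intro l u
    obtain ⟨ht0, ht2, hti⟩ := sqrt_facts u
    set t := Real.sqrt (∑ i, u i ^ 2) with htdef
    have h1 : t ^ 1 ≤ 1 + t ^ 4 := pow_le_aux t ht0 1 (by norm_num)
    have h3 : t ^ 3 ≤ 1 + t ^ 4 := pow_le_aux t ht0 3 (by norm_num)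
    have h4 : t ^ 4 = (∑ i, u i ^ 2) ^ 2 := by rw [← ht2]; ring
    have hwu : |w u| ≤ 1 + t ^ 2 := by rw [ht2]; exact hwb u
    calc |w u * u l| = |w u| * |u l| := abs_mul _ _
      _ ≤ (1 + t ^ 2) * t := by
          apply mul_le_mul hwu (hti l) (abs_nonneg _)
          nlinarith
      _ ≤ 2 * (1 + t ^ 4) := by nlinarith
      _ = 2 * (1 + (∑ i, u i ^ 2) ^ 2) := by rw [h4]
  -- norm of u vs sqrt of sum of squares
  have hnorm : ∀ u : Fin p → ℝ, ‖u‖ ≤ Real.sqrt (∑ i, u i ^ 2) := by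
    intro u
    obtain ⟨ht0, -, hti⟩ := sqrt_facts u
    rw [pi_norm_le_iff_of_nonneg ht0]
    intro i
    simpa [Real.norm_eq_abs] using hti i
  -- remainder bound
  have hPRb : ∀ u : Fin p → ℝ,
      |w u * K u * (f (x + h • u) - f x - fderiv ℝ f x (h • u))|
        ≤ 2 * C₂ * h ^ 2 * ((1 + (∑ i, u i ^ 2) ^ 2) * K u) := by
    intro u
    obtain ⟨ht0, ht2, hti⟩ := sqrt_facts u
    set t := Real.sqrt (∑ i, u i ^ 2) with htdef
    have h4 : t ^ 4 = (∑ i, u i ^ 2) ^ 2 := by rw [← ht2]; ring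
    have hwu : |w u| ≤ 1 + t ^ 2 := by rw [ht2]; exact hwb u
    have hRu : |f (x + h • u) - f x - fderiv ℝ f x (h • u)| ≤ C₂ * (h ^ 2 * t ^ 2) := by
      refine le_trans (taylor_bound f hf C₂ hC₂ x (h • u)) ?_
      have hsn : ‖h • u‖ ≤ h * t := by
        rw [norm_smul, Real.norm_eq_abs, abs_of_pos hh]
        exact mul_le_mul_of_nonneg_left (hnorm u) hh.le
      have : ‖h • u‖ ^ 2 ≤ (h * t) ^ 2 := by
        apply pow_le_pow_left₀ (norm_nonneg _) hsn
      nlinarith [norm_nonneg (h • u)]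
    have habs : |w u * K u * (f (x + h • u) - f x - fderiv ℝ f x (h • u))|
        = |w u| * K u * |f (x + h • u) - f x - fderiv ℝ f x (h • u)| := by
      rw [abs_mul, abs_mul, abs_of_nonneg (hK_nonneg u)]
    rw [habs]
    have step1 : |w u| * K u * |f (x + h • u) - f x - fderiv ℝ f x (h • u)|
        ≤ (1 + t ^ 2) * K u * (C₂ * (h ^ 2 * t ^ 2)) := by
      apply mul_le_mul
      · exact mul_le_mul_of_nonneg_right hwu (hK_nonneg u)
      · exact hRu
      · exact abs_nonneg _
      · exact mul_nonneg (by positivity) (hK_nonneg u)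
    refine le_trans step1 ?_
    have hq : (1 + t ^ 2) * t ^ 2 ≤ 2 * (1 + t ^ 4) := by
      have h2 : t ^ 2 ≤ 1 + t ^ 4 := pow_le_aux t ht0 2 (by norm_num)
      nlinarith [pow_nonneg ht0 4]
    calc (1 + t ^ 2) * K u * (C₂ * (h ^ 2 * t ^ 2))
        = (C₂ * h ^ 2) * ((1 + t ^ 2) * t ^ 2) * K u := by ring
      _ ≤ (C₂ * h ^ 2) * (2 * (1 + t ^ 4)) * K u := by
          apply mul_le_mul_of_nonneg_right _ (hK_nonneg u)
          apply mul_le_mul_of_nonneg_left hq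
          positivity
      _ = 2 * C₂ * h ^ 2 * ((1 + (∑ i, u i ^ 2) ^ 2) * K u) := by rw [← h4]; ring
  -- integrability
  have hI0 : Integrable (fun u : Fin p → ℝ => w u * K u) := by
    refine integrable_dom K hK_int _ (hw.aestronglyMeasurable.mul hKa) 2 fun u => ?_
    rw [abs_mul, abs_of_nonneg (hK_nonneg u)]
    calc |w u| * K u ≤ (2 * (1 + (∑ i, u i ^ 2) ^ 2)) * K u :=
          mul_le_mul_of_nonneg_right (hb0 u) (hK_nonneg u)
      _ = 2 * ((1 + (∑ i, u i ^ 2) ^ 2) * K u) := by ring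
  have hI1 : ∀ l : Fin p, Integrable (fun u : Fin p → ℝ => w u * u l * K u) := by
    intro l
    refine integrable_dom K hK_int _
      (((hw.mul (continuous_apply l))).aestronglyMeasurable.mul hKa) 2 fun u => ?_
    rw [abs_mul, abs_of_nonneg (hK_nonneg u)]
    calc |w u * u l| * K u ≤ (2 * (1 + (∑ i, u i ^ 2) ^ 2)) * K u :=
          mul_le_mul_of_nonneg_right (hb1 l u) (hK_nonneg u)
      _ = 2 * ((1 + (∑ i, u i ^ 2) ^ 2) * K u) := by ring
  have hRcont : Continuous fun u : Fin p → ℝ =>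
      f (x + h • u) - f x - fderiv ℝ f x (h • u) := by
    have h1 : Continuous fun u : Fin p → ℝ => x + h • u :=
      continuous_const.add (continuous_const_smul h)
    exact ((hf.continuous.comp h1).sub continuous_const).sub
      ((fderiv ℝ f x).continuous.comp (continuous_const_smul h))
  have hPR : Integrable (fun u : Fin p → ℝ =>
      w u * K u * (f (x + h • u) - f x - fderiv ℝ f x (h • u))) := by
    refine integrable_dom K hK_int _
      ((hw.aestronglyMeasurable.mul hKa).mul hRcont.aestronglyMeasurable)
      (2 * C₂ * h ^ 2) fun u => ?_
    have := hPRb u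
    linarith [hPRb u]
  have hIsum : Integrable (fun u : Fin p → ℝ =>
      w u * K u * f x + ∑ l, (h * fderiv ℝ f x (Pi.single l 1)) * (w u * u l * K u)) :=
    (hI0.mul_const _).add (integrable_finset_sum _ fun l _ => (hI1 l).const_mul _)
  -- decomposition of the integral
  have key : (∫ u : Fin p → ℝ, w u * K u * f (x + h • u))
      = (∫ u : Fin p → ℝ, (w u * K u * f x
          + ∑ l, (h * fderiv ℝ f x (Pi.single l 1)) * (w u * u l * K u)))
        + ∫ u : Fin p → ℝ, w u * K u * (f (x + h • u) - f x - fderiv ℝ f x (h • u)) := by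
    rw [← integral_add hIsum hPR]
    refine integral_congr_ae (Filter.Eventually.of_forall fun u => ?_)
    simp only
    have hder : fderiv ℝ f x (h • u) = ∑ l, (h * u l) * fderiv ℝ f x (Pi.single l 1) := by
      rw [fderiv_expand]
      refine Finset.sum_congr rfl fun l _ => ?_
      simp [smul_eq_mul]
    have hsum : ∑ l, (h * fderiv ℝ f x (Pi.single l 1)) * (w u * u l * K u)
        = w u * K u * ∑ l, (h * u l) * fderiv ℝ f x (Pi.single l 1) := by
      rw [Finset.mul_sum]
      exact Finset.sum_congr rfl fun l _ => by ring
    rw [hsum, hder]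
    ring
  rw [key]
  rw [integral_add (hI0.mul_const _) (integrable_finset_sum _ fun l _ => (hI1 l).const_mul _)]
  rw [integral_mul_const]
  have hsum2 : (∫ u : Fin p → ℝ,
      ∑ l, (h * fderiv ℝ f x (Pi.single l 1)) * (w u * u l * K u))
      = h * ∑ l, fderiv ℝ f x (Pi.single l 1) * ∫ u : Fin p → ℝ, w u * u l * K u := by
    rw [integral_finset_sum _ fun l _ => (hI1 l).const_mul _]
    rw [Finset.mul_sum]
    refine Finset.sum_congr rfl fun l _ => ?_
    rw [integral_const_mul]
    ring
  rw [hsum2]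
  have hcancel : ∀ A B E : ℝ, |(A + B) + E - (A + B)| = |E| := by
    intro A B E; congr 1; ring
  rw [hcancel]
  calc |∫ u : Fin p → ℝ, w u * K u * (f (x + h • u) - f x - fderiv ℝ f x (h • u))|
      ≤ ∫ u : Fin p → ℝ, |w u * K u * (f (x + h • u) - f x - fderiv ℝ f x (h • u))| :=
by
        have := norm_integral_le_integral_norm (μ := volume)
          (fun u : Fin p → ℝ => w u * K u * (f (x + h • u) - f x - fderiv ℝ f x (h • u)))
        simp only [Real.norm_eq_abs] at this
        exact this
    _ ≤ ∫ u : Fin p → ℝ, 2 * C₂ * h ^ 2 * ((1 + (∑ i, u i ^ 2) ^ 2) * K u) := by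
        refine integral_mono hPR.abs (hK_int.const_mul _)
          (fun u => hPRb u)
    _ = 2 * C₂ * (∫ u : Fin p → ℝ, (1 + (∑ i, u i ^ 2) ^ 2) * K u) * h ^ 2 := by
        rw [integral_const_mul]; ring

end Stmt6Aux

open Stmt6Aux


/-- Expansion of the expected normalized weighted design matrix
`A(h) = ∫ (1,uᵀ)ᵀ (1,uᵀ) K(u) f(x+hu) du`: as `h → 0⁺`,
`A(h) = [[κ₀ f(x), h μ₂ ∇f(x)ᵀ], [h μ₂ ∇f(x), μ₂ f(x) I_p]] + O(h²)`
entrywise, where `κ₀ = ∫ K`, `μ₂ = ∫ u₁² K(u) du`. -/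
theorem stmt6 (p : ℕ) (hp : 0 < p)
    (K : (Fin p → ℝ) → ℝ) (hK_nonneg : ∀ u, 0 ≤ K u)
    (k : ℝ → ℝ) (hK_sym : ∀ u, K u = k (Real.sqrt (∑ i, u i ^ 2)))
    (hK_int : Integrable (fun u : Fin p → ℝ => (1 + (∑ i, u i ^ 2) ^ 2) * K u) volume)
    (f : (Fin p → ℝ) → ℝ) (hf : ContDiff ℝ 2 f)
    (hf_bdd : ∀ i : ℕ, 1 ≤ i → i ≤ 2 → ∃ C, ∀ y, ‖iteratedFDeriv ℝ i f y‖ ≤ C)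
    (x : Fin p → ℝ) :
    ∃ C > 0, ∃ h₀ > 0, ∀ h : ℝ, 0 < h → h ≤ h₀ →
      ∀ a b : Fin 1 ⊕ Fin p,
        |(∫ u : Fin p → ℝ, aug u a * aug u b * K u * f (x + h • u)) -
            (match a, b with
              | Sum.inl _, Sum.inl _ => (∫ u : Fin p → ℝ, K u) * f x
              | Sum.inl _, Sum.inr j =>
                  h * (∫ u : Fin p → ℝ, u ⟨0, hp⟩ ^ 2 * K u) *
                    fderiv ℝ f x (Pi.single j 1)
              | Sum.inr i, Sum.inl _ =>
                  h * (∫ u : Fin p → ℝ, u ⟨0, hp⟩ ^ 2 * K u) *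
                    fderiv ℝ f x (Pi.single i 1)
              | Sum.inr i, Sum.inr j =>
                  (∫ u : Fin p → ℝ, u ⟨0, hp⟩ ^ 2 * K u) * f x *
                    (if i = j then 1 else 0))|
          ≤ C * h ^ 2 := by
    classical
  obtain ⟨C₂, hC₂⟩ := hf_bdd 2 (by norm_num) (by norm_num)
  have hC₂0 : 0 ≤ C₂ := le_trans (norm_nonneg _) (hC₂ x)
  have hM0 : 0 ≤ ∫ u : Fin p → ℝ, (1 + (∑ i, u i ^ 2) ^ 2) * K u := by
    apply integral_nonneg
    intro u
    have hS : 0 ≤ ∑ i, u i ^ 2 := Finset.sum_nonneg fun i _ => sq_nonneg _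
    exact mul_nonneg (by positivity) (hK_nonneg u)
  set M := ∫ u : Fin p → ℝ, (1 + (∑ i, u i ^ 2) ^ 2) * K u with hMdef
  refine ⟨2 * C₂ * M + 1, by nlinarith, 1, one_pos, ?_⟩
  intro h hh0 hh1 a b
  have hfinal : 2 * C₂ * M * h ^ 2 ≤ (2 * C₂ * M + 1) * h ^ 2 := by nlinarith [sq_nonneg h]
  -- basic facts used for the `w` bounds
  have hSnn : ∀ u : Fin p → ℝ, 0 ≤ ∑ i, u i ^ 2 :=
    fun u => Finset.sum_nonneg fun i _ => sq_nonneg _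
  have hcoord : ∀ (u : Fin p → ℝ) (i : Fin p), |u i| ≤ 1 + ∑ j, u j ^ 2 := by
    intro u i
    obtain ⟨ht0, ht2, hti⟩ := sqrt_facts u
    have : Real.sqrt (∑ j, u j ^ 2) ≤ 1 + (Real.sqrt (∑ j, u j ^ 2)) ^ 2 := by nlinarith
    rw [← ht2]
    exact le_trans (hti i) this
  have hcoord2 : ∀ (u : Fin p → ℝ) (i j : Fin p), |u i * u j| ≤ 1 + ∑ l, u l ^ 2 := by
    intro u i j
    obtain ⟨ht0, ht2, hti⟩ := sqrt_facts u
    rw [← ht2, abs_mul]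
    nlinarith [hti i, hti j, abs_nonneg (u i), abs_nonneg (u j)]
  cases a with
  | inl v =>
    cases b with
    | inl v' =>
      simp only [aug, Sum.elim_inl]
      have hmd := main_decomp K k hK_sym hK_int hK_nonneg f hf C₂ hC₂ x h hh0
        (fun _ => (1 : ℝ) * 1) (continuous_const.mul continuous_const)
        (fun u => by rw [abs_of_nonneg (by norm_num : (0:ℝ) ≤ 1 * 1)]; nlinarith [hSnn u])
      have e1 : (∫ u : Fin p → ℝ, 1 * 1 * K u) = ∫ u : Fin p → ℝ, K u := by
        refine integral_congr_ae (Filter.Eventually.of_forall fun u => ?_); ring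
      have e2 : ∀ l : Fin p, (∫ u : Fin p → ℝ, 1 * 1 * u l * K u) = 0 := by
        intro l
        have : (fun u : Fin p → ℝ => 1 * 1 * u l * K u) = fun u => u l * K u := by
          funext u; ring
        rw [this]; exact mom1 K k hK_sym l
      rw [e1] at hmd
      simp only [e2, mul_zero, Finset.sum_const_zero, add_zero] at hmd
      exact le_trans hmd hfinal
    | inr j =>
      simp only [aug, Sum.elim_inl, Sum.elim_inr]
      have hmd := main_decomp K k hK_sym hK_int hK_nonneg f hf C₂ hC₂ x h hh0
        (fun u => 1 * u j) (continuous_const.mul (continuous_apply j))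
        (fun u => by simpa using hcoord u j)
      have e1 : (∫ u : Fin p → ℝ, 1 * u j * K u) = 0 := by
        have : (fun u : Fin p → ℝ => 1 * u j * K u) = fun u => u j * K u := by
          funext u; ring
        rw [this]; exact mom1 K k hK_sym j
      have e2 : ∀ l : Fin p, (∫ u : Fin p → ℝ, 1 * u j * u l * K u)
          = if l = j then ∫ u : Fin p → ℝ, u ⟨0, hp⟩ ^ 2 * K u else 0 := by
        intro l
        by_cases hlj : l = j
        · subst hlj
          rw [if_pos rfl]
          have : (fun u : Fin p → ℝ => 1 * u l * u l * K u) = fun u => u l * u l * K u := by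
            funext u; ring
          rw [this]; exact mom2_diag K k hK_sym ⟨0, hp⟩ l
        · rw [if_neg hlj]
          have : (fun u : Fin p → ℝ => 1 * u j * u l * K u) = fun u => u j * u l * K u := by
            funext u; ring
          rw [this]; exact mom2_off K k hK_sym (fun e => hlj e.symm)
      have e3 : ∑ l : Fin p, fderiv ℝ f x (Pi.single l 1) *
          ∫ u : Fin p → ℝ, 1 * u j * u l * K u
          = fderiv ℝ f x (Pi.single j 1) * ∫ u : Fin p → ℝ, u ⟨0, hp⟩ ^ 2 * K u := by
        simp only [e2]
        rw [Finset.sum_eq_single j]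
        · simp
        · intro b _ hb; simp [hb]
        · simp
      rw [e1, e3] at hmd
      have hTeq : h * (∫ u : Fin p → ℝ, u ⟨0, hp⟩ ^ 2 * K u) * fderiv ℝ f x (Pi.single j 1)
          = 0 * f x + h * (fderiv ℝ f x (Pi.single j 1) *
              ∫ u : Fin p → ℝ, u ⟨0, hp⟩ ^ 2 * K u) := by ring
      rw [hTeq]
      exact le_trans hmd hfinal
  | inr i =>
    cases b with
    | inl v =>
      simp only [aug, Sum.elim_inl, Sum.elim_inr]
      have hmd := main_decomp K k hK_sym hK_int hK_nonneg f hf C₂ hC₂ x h hh0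
        (fun u => u i * 1) ((continuous_apply i).mul continuous_const)
        (fun u => by simpa using hcoord u i)
      have e1 : (∫ u : Fin p → ℝ, u i * 1 * K u) = 0 := by
        have : (fun u : Fin p → ℝ => u i * 1 * K u) = fun u => u i * K u := by
          funext u; ring
        rw [this]; exact mom1 K k hK_sym i
      have e2 : ∀ l : Fin p, (∫ u : Fin p → ℝ, u i * 1 * u l * K u)
          = if l = i then ∫ u : Fin p → ℝ, u ⟨0, hp⟩ ^ 2 * K u else 0 := by
        intro l
        by_cases hli : l = i
        · subst hli
          rw [if_pos rfl]
          have : (fun u : Fin p → ℝ => u l * 1 * u l * K u) = fun u => u l * u l * K u := by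
            funext u; ring
          rw [this]; exact mom2_diag K k hK_sym ⟨0, hp⟩ l
        · rw [if_neg hli]
          have : (fun u : Fin p → ℝ => u i * 1 * u l * K u) = fun u => u i * u l * K u := by
            funext u; ring
          rw [this]; exact mom2_off K k hK_sym (fun e => hli e.symm)
      have e3 : ∑ l : Fin p, fderiv ℝ f x (Pi.single l 1) *
          ∫ u : Fin p → ℝ, u i * 1 * u l * K u
          = fderiv ℝ f x (Pi.single i 1) * ∫ u : Fin p → ℝ, u ⟨0, hp⟩ ^ 2 * K u := by
        simp only [e2]
        rw [Finset.sum_eq_single i]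
        · simp
        · intro b _ hb; simp [hb]
        · simp
      rw [e1, e3] at hmd
      have hTeq : h * (∫ u : Fin p → ℝ, u ⟨0, hp⟩ ^ 2 * K u) * fderiv ℝ f x (Pi.single i 1)
          = 0 * f x + h * (fderiv ℝ f x (Pi.single i 1) *
              ∫ u : Fin p → ℝ, u ⟨0, hp⟩ ^ 2 * K u) := by ring
      rw [hTeq]
      exact le_trans hmd hfinal
    | inr j =>
      simp only [aug, Sum.elim_inr]
      have hmd := main_decomp K k hK_sym hK_int hK_nonneg f hf C₂ hC₂ x h hh0
        (fun u => u i * u j) ((continuous_apply i).mul (continuous_apply j))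
        (fun u => hcoord2 u i j)
      have e1 : (∫ u : Fin p → ℝ, u i * u j * K u)
          = if i = j then ∫ u : Fin p → ℝ, u ⟨0, hp⟩ ^ 2 * K u else 0 := by
        by_cases hij : i = j
        · subst hij
          rw [if_pos rfl]
          exact mom2_diag K k hK_sym ⟨0, hp⟩ i
        · rw [if_neg hij]
          exact mom2_off K k hK_sym hij
      have e2 : ∀ l : Fin p, (∫ u : Fin p → ℝ, u i * u j * u l * K u) = 0 :=
        fun l => mom3 K k hK_sym i j l
      rw [e1] at hmd
      simp only [e2, mul_zero, Finset.sum_const_zero, add_zero] at hmd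
      have hTeq : (∫ u : Fin p → ℝ, u ⟨0, hp⟩ ^ 2 * K u) * f x * (if i = j then 1 else 0)
          = (if i = j then ∫ u : Fin p → ℝ, u ⟨0, hp⟩ ^ 2 * K u else 0) * f x := by
        by_cases hij : i = j <;> simp [hij]
      rw [hTeq]
      exact le_trans hmd hfinal
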